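/- For any two disjoint subsets Z, O of Fin n → ZMod 2 there exists a unique Boolean polynomial p ∈ MvPolynomial (Fin n) (ZMod 2) such that p(z) = 0 for all z ∈ Z, p(o) = 1 for all o ∈ O, and every Boolean polynomial q with q(z) = 0 for all z ∈ Z and q(o) = 1 for all o ∈ O satisfies p ≤ q in the extended lex ordering. -/

import Mathlib

open MvPolynomial

/-- A Boolean (multilinear) polynomial: every variable occurs with exponent ≤ 1
in every monomial of the support. -/
def IsBooleanPoly {n : ℕ} (f : MvPolynomial (Fin n) (ZMod 2)) : Prop :=
  ∀ m ∈ f.support, ∀ i, m i ≤ 1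

/-- The field ideal ⟨x_i² + x_i : i⟩. -/
noncomputable def fieldIdeal (n : ℕ) : Ideal (MvPolynomial (Fin n) (ZMod 2)) :=
  Ideal.span (Set.range fun i : Fin n => X i ^ 2 + X i)

/-- The vanishing ideal of a set of points. -/
noncomputable def pointsVanishingIdeal {n : ℕ} (P : Set (Fin n → ZMod 2)) :
    Ideal (MvPolynomial (Fin n) (ZMod 2)) where
  carrier := {f | ∀ p ∈ P, eval p f = 0}
  add_mem' := by
    intro a b ha hb p hp
    simp [ha p hp, hb p hp]
  zero_mem' := by
    intro p hp
    simp
  smul_mem' := by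
    intro c a ha p hp
    simp [smul_eq_mul, ha p hp]

/-- Strict extended lex order on Boolean polynomials: `p < q` iff the lex-largest
exponent vector in the symmetric difference of the supports belongs to the support of `q`. -/
def ExtLexLt {n : ℕ} (p q : MvPolynomial (Fin n) (ZMod 2)) : Prop :=
  ∃ m ∈ q.support \ p.support, ∀ m' ∈ (symmDiff p.support q.support), toLex m' ≤ toLex m

def ExtLexLe {n : ℕ} (p q : MvPolynomial (Fin n) (ZMod 2)) : Prop :=
  p = q ∨ ExtLexLt p q

/-- `t` is the leading monomial of `f` with respect to the monomial order `m`. -/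
def IsLeadingMonomial {n : ℕ} (m : MonomialOrder (Fin n))
    (f : MvPolynomial (Fin n) (ZMod 2)) (t : Fin n →₀ ℕ) : Prop :=
  t ∈ f.support ∧ ∀ t' ∈ f.support, m.toSyn t' ≤ m.toSyn t

/-- `t` is a standard monomial of the ideal `I` w.r.t. the monomial order `m`:
it is not the leading monomial of any (necessarily nonzero) element of `I`. -/
def IsStdMonomial {n : ℕ} (m : MonomialOrder (Fin n))
    (I : Ideal (MvPolynomial (Fin n) (ZMod 2))) (t : Fin n →₀ ℕ) : Prop :=
  ¬ ∃ f ∈ I, IsLeadingMonomial m f t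


section Aux

variable {n : ℕ}

open Finset in
/-- The colex "key" of a polynomial: the colex class of the lex-images of its support. -/
noncomputable def extKey (p : MvPolynomial (Fin n) (ZMod 2)) : Colex (Finset (Lex (Fin n →₀ ℕ))) :=
  toColex (p.support.image (toLex : (Fin n →₀ ℕ) → Lex (Fin n →₀ ℕ)))

lemma extKey_inj {p q : MvPolynomial (Fin n) (ZMod 2)} (h : extKey p = extKey q) : p = q := by
  classical
  have himg := toColex_inj.1 h
  have hsupp : p.support = q.support :=
    Finset.image_injective toLex.injective himg
  have h01 : ∀ x : ZMod 2, x ≠ 0 → x = 1 := by decide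
  ext m
  by_cases hm : m ∈ p.support
  · have hm' : m ∈ q.support := hsupp ▸ hm
    rw [h01 _ (MvPolynomial.mem_support_iff.1 hm), h01 _ (MvPolynomial.mem_support_iff.1 hm')]
  · have hm' : m ∉ q.support := hsupp ▸ hm
    rw [MvPolynomial.notMem_support_iff.1 hm, MvPolynomial.notMem_support_iff.1 hm']

lemma extLexLt_iff_extKey_lt (p q : MvPolynomial (Fin n) (ZMod 2)) :
    ExtLexLt p q ↔ extKey p < extKey q := by
  classical
  rw [extKey, extKey, Finset.Colex.toColex_lt_toColex_iff_exists_forall_lt]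
  constructor
  · rintro ⟨m, hm, hmax⟩
    rw [Finset.mem_sdiff] at hm
    refine ⟨toLex m, Finset.mem_image_of_mem _ hm.1, ?_, ?_⟩
    · intro hmem
      obtain ⟨m', hm', he⟩ := Finset.mem_image.1 hmem
      exact hm.2 (toLex.injective he ▸ hm')
    · rintro b hb hbn
      obtain ⟨m', hm', rfl⟩ := Finset.mem_image.1 hb
      have hm'q : m' ∉ q.support := fun h => hbn (Finset.mem_image_of_mem _ h)
      have hsym : m' ∈ symmDiff p.support q.support :=
        Finset.mem_symmDiff.2 (Or.inl ⟨hm', hm'q⟩)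
      refine lt_of_le_of_ne (hmax m' hsym) ?_
      intro he
      exact hm.2 (toLex.injective he ▸ hm')
  · rintro ⟨a, ha, han, hmax⟩
    obtain ⟨m0, hm0q, rfl⟩ := Finset.mem_image.1 ha
    have hm0p : m0 ∉ p.support := fun h => han (Finset.mem_image_of_mem _ h)
    have hne : (symmDiff p.support q.support).Nonempty :=
      ⟨m0, Finset.mem_symmDiff.2 (Or.inr ⟨hm0q, hm0p⟩)⟩
    obtain ⟨M, hM, hMmax⟩ := Finset.exists_max_image _
      (toLex : (Fin n →₀ ℕ) → Lex (Fin n →₀ ℕ)) hne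
    rcases Finset.mem_symmDiff.1 hM with ⟨hMp, hMq⟩ | ⟨hMq, hMp⟩
    · exfalso
      have h1 : toLex M < toLex m0 := by
        refine hmax _ (Finset.mem_image_of_mem _ hMp) ?_
        intro h
        obtain ⟨m', hm', he⟩ := Finset.mem_image.1 h
        exact hMq (toLex.injective he ▸ hm')
      have h2 : toLex m0 ≤ toLex M :=
        hMmax m0 (Finset.mem_symmDiff.2 (Or.inr ⟨hm0q, hm0p⟩))
      exact absurd (h2.trans_lt h1) (lt_irrefl _)
    · exact ⟨M, Finset.mem_sdiff.2 ⟨hMq, hMp⟩, hMmax⟩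

lemma extKey_le_of_extLexLe {p q : MvPolynomial (Fin n) (ZMod 2)} (h : ExtLexLe p q) :
    extKey p ≤ extKey q := by
  rcases h with rfl | h
  · exact le_rfl
  · exact le_of_lt ((extLexLt_iff_extKey_lt p q).1 h)

/-- The indicator polynomial of a point. -/
noncomputable def deltaPoly (v : Fin n → ZMod 2) : MvPolynomial (Fin n) (ZMod 2) :=
  ∏ i : Fin n, (X i + C (v i + 1))

lemma eval_deltaPoly (v w : Fin n → ZMod 2) :
    eval w (deltaPoly v) = if w = v then 1 else 0 := by
  rw [deltaPoly, map_prod]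
  simp only [map_add, eval_X, eval_C]
  by_cases h : w = v
  · subst h
    rw [if_pos rfl]
    refine Finset.prod_eq_one fun i _ => ?_
    have : ∀ x : ZMod 2, x + (x + 1) = 1 := by decide
    exact this _
  · rw [if_neg h]
    obtain ⟨i, hi⟩ : ∃ i, w i ≠ v i := by
      by_contra hc
      push_neg at hc
      exact h (funext hc)
    refine Finset.prod_eq_zero (Finset.mem_univ i) ?_
    have : ∀ x y : ZMod 2, x ≠ y → x + (y + 1) = 0 := by decide
    exact this _ _ hi

lemma support_prod_linear (c : Fin n → ZMod 2) (s : Finset (Fin n)) :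
    ∀ m ∈ (∏ i ∈ s, (X i + C (c i) : MvPolynomial (Fin n) (ZMod 2))).support,
      ∀ i, m i ≤ if i ∈ s then 1 else 0 := by
  classical
  induction s using Finset.induction_on with
  | empty =>
    intro m hm i
    rw [Finset.prod_empty] at hm
    have h1 : (1 : MvPolynomial (Fin n) (ZMod 2)) = monomial 0 1 := by
      simp [MvPolynomial.monomial_zero']
    rw [h1] at hm
    have := MvPolynomial.support_monomial_subset hm
    rw [Finset.mem_singleton] at this
    subst this
    simp
  | @insert a s ha ih =>
    intro m hm i
    rw [Finset.prod_insert ha] at hm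
    have hsub := MvPolynomial.support_mul (X a + C (c a))
      (∏ i ∈ s, (X i + C (c i) : MvPolynomial (Fin n) (ZMod 2)))
    obtain ⟨m1, hm1, m2, hm2, rfl⟩ := Finset.mem_add.1 (hsub hm)
    have hm1' : m1 ∈ ({Finsupp.single a 1, 0} : Finset (Fin n →₀ ℕ)) := by
      have h := MvPolynomial.support_add hm1
      rw [Finset.mem_union] at h
      rcases h with h | h
      · rw [MvPolynomial.support_X] at h
        rw [Finset.mem_singleton] at h
        simp [h]
      · have h2 : (C (c a) : MvPolynomial (Fin n) (ZMod 2)) = monomial 0 (c a) := by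
          simp [MvPolynomial.monomial_zero']
        rw [h2] at h
        have := MvPolynomial.support_monomial_subset h
        rw [Finset.mem_singleton] at this
        simp [this]
    have hb1 : m1 i ≤ if i = a then 1 else 0 := by
      rcases Finset.mem_insert.1 hm1' with h | h
      · subst h
        rw [Finsupp.single_apply]
        by_cases hia : i = a
        · subst hia
          simp
        · rw [if_neg (fun h => hia h.symm), if_neg hia]
      · rw [Finset.mem_singleton] at h
        subst h
        simp
    have hb2 : m2 i ≤ if i ∈ s then 1 else 0 := ih m2 hm2 i
    rw [Finsupp.add_apply]
    by_cases hia : i = a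
    · subst hia
      rw [if_pos (Finset.mem_insert_self _ _)]
      rw [if_pos rfl] at hb1
      rw [if_neg ha] at hb2
      omega
    · by_cases his : i ∈ s
      · rw [if_pos (Finset.mem_insert_of_mem his)]
        rw [if_neg hia] at hb1
        rw [if_pos his] at hb2
        omega
      · rw [if_neg (by simp [hia, his])]
        rw [if_neg hia] at hb1
        rw [if_neg his] at hb2
        omega

lemma isBooleanPoly_deltaPoly (v : Fin n → ZMod 2) : IsBooleanPoly (deltaPoly v) := by
  intro m hm i
  have := support_prod_linear (fun i => v i + 1) Finset.univ m hm i
  simpa using this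

lemma isBooleanPoly_sum {α : Type*} (s : Finset α)
    (f : α → MvPolynomial (Fin n) (ZMod 2)) (h : ∀ a ∈ s, IsBooleanPoly (f a)) :
    IsBooleanPoly (∑ a ∈ s, f a) := by
  classical
  induction s using Finset.induction_on with
  | empty => intro m hm i; simp at hm
  | @insert a s ha ih =>
    intro m hm i
    rw [Finset.sum_insert ha] at hm
    rcases Finset.mem_union.1 (MvPolynomial.support_add hm) with h' | h'
    · exact h a (Finset.mem_insert_self _ _) m h' i
    · exact ih (fun b hb => h b (Finset.mem_insert_of_mem hb)) m h' i

lemma finite_booleanPoly :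
    {p : MvPolynomial (Fin n) (ZMod 2) | IsBooleanPoly p}.Finite := by
  classical
  have hinj : Set.InjOn
      (fun (p : MvPolynomial (Fin n) (ZMod 2)) (b : Fin n → Bool) =>
        MvPolynomial.coeff (Finsupp.equivFunOnFinite.symm fun i => if b i then 1 else 0) p)
      {p | IsBooleanPoly p} := by
    intro p hp q hq h
    ext m
    by_cases hm : m ∈ p.support ∪ q.support
    · have hmb : ∀ i, m i ≤ 1 := by
        rcases Finset.mem_union.1 hm with h' | h'
        · exact hp m h'
        · exact hq m h'
      have hmeq : (Finsupp.equivFunOnFinite.symm fun i => if (m i = 1 : Prop) then 1 else 0) = m := by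
        apply Finsupp.ext
        intro i
        have := hmb i
        simp only [Finsupp.coe_equivFunOnFinite_symm]
        split_ifs with h' <;> omega
      have := congrFun h (fun i => decide (m i = 1))
      simp only [decide_eq_true_eq] at this
      rwa [hmeq] at this
    · rw [Finset.mem_union, not_or] at hm
      rw [MvPolynomial.notMem_support_iff.1 hm.1, MvPolynomial.notMem_support_iff.1 hm.2]
  exact Set.Finite.of_finite_image (Set.toFinite _) hinj

end Aux

/-- There is a unique extended-lex-minimal Boolean polynomial interpolating a
partial Boolean function given by disjoint sets `Z` and `O`. -/
theorem existsUnique_extLex_min_interpolation (n : ℕ) (Z O : Set (Fin n → ZMod 2))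
    (hZO : Disjoint Z O) :
    ∃! p : MvPolynomial (Fin n) (ZMod 2),
      IsBooleanPoly p ∧ (∀ z ∈ Z, eval z p = 0) ∧ (∀ o ∈ O, eval o p = 1) ∧
        ∀ q : MvPolynomial (Fin n) (ZMod 2), IsBooleanPoly q →
          (∀ z ∈ Z, eval z q = 0) → (∀ o ∈ O, eval o q = 1) → ExtLexLe p q := by
  classical
  set S : Set (MvPolynomial (Fin n) (ZMod 2)) :=
    {p | IsBooleanPoly p ∧ (∀ z ∈ Z, eval z p = 0) ∧ ∀ o ∈ O, eval o p = 1} with hS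
  have hSfin : S.Finite := finite_booleanPoly.subset fun p hp => hp.1
  have hSne : S.Nonempty := by
    refine ⟨∑ o ∈ O.toFinite.toFinset, deltaPoly o, ?_, ?_, ?_⟩
    · exact isBooleanPoly_sum _ _ fun o _ => isBooleanPoly_deltaPoly o
    · intro z hz
      rw [map_sum]
      refine Finset.sum_eq_zero fun o ho => ?_
      rw [eval_deltaPoly, if_neg]
      rintro rfl
      exact (hZO.le_bot ⟨hz, O.toFinite.mem_toFinset.1 ho⟩ : False)
    · intro o ho
      rw [map_sum]
      rw [Finset.sum_eq_single o]
      · rw [eval_deltaPoly, if_pos rfl]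
      · intro o' _ hne
        rw [eval_deltaPoly, if_neg (Ne.symm hne)]
      · intro hno
        exact absurd (O.toFinite.mem_toFinset.2 ho) hno
  obtain ⟨p, hpS, hpmin⟩ := Set.exists_min_image S extKey hSfin hSne
  have hmin : ∀ q : MvPolynomial (Fin n) (ZMod 2), IsBooleanPoly q →
      (∀ z ∈ Z, eval z q = 0) → (∀ o ∈ O, eval o q = 1) → ExtLexLe p q := by
    intro q hq hq0 hq1
    have hk := hpmin q ⟨hq, hq0, hq1⟩
    rcases eq_or_lt_of_le hk with h | h
    · exact Or.inl (extKey_inj h)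
    · exact Or.inr ((extLexLt_iff_extKey_lt p q).2 h)
  refine ⟨p, ⟨hpS.1, hpS.2.1, hpS.2.2, hmin⟩, ?_⟩
  rintro q ⟨hqB, hq0, hq1, hqmin⟩
  have h1 : extKey q ≤ extKey p := extKey_le_of_extLexLe (hqmin p hpS.1 hpS.2.1 hpS.2.2)
  have h2 : extKey p ≤ extKey q := extKey_le_of_extLexLe (hmin q hqB hq0 hq1)
  exact extKey_inj (le_antisymm h1 h2)
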